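/- In DL_3(q), with α_n the vertex having l_1(α_n) = m_2(α_n) = n (all other coordinates 0, upward edges in T_1 labeled 1) and β_n the vertex with m_3(β_n) = l_3(β_n) = n (all other coordinates 0, upward edges labeled 1), one has d(β_n, α_n) = 2n = d(β_n, id) for every n. -/

import Mathlib

open Finset

/-- A vertex of the oriented (q+1)-valent tree `T` underlying Diestel–Leader graphs:
descend `m` edges from the basepoint `o` along its ancestor ray (whose edges all
carry the label `0`), then ascend along the edge labels listed in `w`.
The normalization condition (if `m ≠ 0`, the first label of `w` is not `0`)
makes this representation unique. -/
structure TreeVertex (q : ℕ) where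
  m : ℕ
  w : List (Fin q)
  norm : ∀ a t, m ≠ 0 → w = a :: t → (a : ℕ) ≠ 0

namespace TreeVertex

variable {q : ℕ}

/-- the basepoint `o` of the tree -/
def o (q : ℕ) : TreeVertex q := ⟨0, [], fun _ _ h _ => absurd rfl h⟩

/-- `l v = d(v, o ⋏ v)` -/
def l (v : TreeVertex q) : ℕ := v.w.length

/-- the height function `h = l - m` -/
def h (v : TreeVertex q) : ℤ := (v.l : ℤ) - (v.m : ℤ)

/-- length of the longest common prefix of two lists -/
def cpl : List (Fin q) → List (Fin q) → ℕ
  | a :: s, b :: t => if a = b then cpl s t + 1 else 0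
  | _, _ => 0

/-- `mPair x y = d(x, x ⋏ y)`, the distance from `x` to the greatest common
ancestor of `x` and `y`. -/
def mPair (x y : TreeVertex q) : ℕ :=
  if x.m < y.m then x.l + (y.m - x.m)
  else if y.m < x.m then x.l
  else x.l - cpl x.w y.w

/-- the graph distance in the tree -/
def dist (x y : TreeVertex q) : ℕ := mPair x y + mPair y x

end TreeVertex

/-- The Diestel–Leader graph `DL_d(q)`: `d`-tuples of tree vertices whose heights
sum to `0`. -/
structure DL (d q : ℕ) where
  t : Fin d → TreeVertex q
  hsum : ∑ i, (t i).h = 0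

namespace DL

variable {d q : ℕ}

/-- the basepoint `id` of `DL_d(q)` -/
def id0 (d q : ℕ) : DL d q :=
  ⟨fun _ => TreeVertex.o q, by simp [TreeVertex.h, TreeVertex.o, TreeVertex.l]⟩

/-- the pairwise coordinate `m_i(x,y) = d_i(p_i x, p_i x ⋏ p_i y)` -/
def mm (x y : DL d q) (i : Fin d) : ℕ := TreeVertex.mPair (x.t i) (y.t i)

/-- the pairwise coordinate `l_i(x,y) = d_i(p_i y, p_i x ⋏ p_i y)` -/
def ll (x y : DL d q) (i : Fin d) : ℕ := TreeVertex.mPair (y.t i) (x.t i)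

/-- the coordinate `m_i(x)` -/
def mc (x : DL d q) (i : Fin d) : ℕ := (x.t i).m

/-- the coordinate `l_i(x)` -/
def lc (x : DL d q) (i : Fin d) : ℕ := (x.t i).l

/-- the height coordinate `h_i(x) = l_i(x) - m_i(x)` -/
def hc (x : DL d q) (i : Fin d) : ℤ := (x.t i).h

/-- The Stein–Taback quantity `f_{σ,i}` (here `i` is 1-based, `2 ≤ i ≤ d`):
`f_{σ,i} = m_{σ(1)} + ⋯ + m_{σ(i)} + l_{σ(i)} + ⋯ + l_{σ(d)}` for `2 ≤ i ≤ d-1`,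
and `f_{σ,d} = 2m_{σ(1)} + m_{σ(2)} + ⋯ + m_{σ(d)} + l_{σ(d)}`. -/
def fST {d : ℕ} (m l : Fin d → ℕ) (σ : Equiv.Perm (Fin d)) (i : ℕ) : ℕ :=
  if i = d then
    (∑ j, m (σ j)) + (∑ j ∈ univ.filter fun j : Fin d => (j : ℕ) = 0, m (σ j))
      + (∑ j ∈ univ.filter fun j : Fin d => (j : ℕ) = d - 1, l (σ j))
  else
    (∑ j ∈ univ.filter fun j : Fin d => (j : ℕ) + 1 ≤ i, m (σ j))
      + (∑ j ∈ univ.filter fun j : Fin d => i ≤ (j : ℕ) + 1, l (σ j))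

/-- The distance on `DL_d(q)`, via the Stein–Taback formula
`d(x,y) = min_{σ ∈ Σ_d} max_{2 ≤ i ≤ d} f_{σ,i}(x,y)`. -/
noncomputable def dist (x y : DL d q) : ℕ :=
  ⨅ σ : Equiv.Perm (Fin d), ⨆ i ∈ Finset.Icc 2 d, fST (mm x y) (ll x y) σ i

end DL

namespace DL3

/-- the label `1` (requires `2 ≤ q`) -/
def one (q : ℕ) (hq : 2 ≤ q) : Fin q := ⟨1, by omega⟩

/-- the tree vertex at depth `k` obtained by descending `k` edges from `o` and
ascending `k` edges all labeled `1`; it satisfies `m = l = k`, `h = 0`. -/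
def ray (q : ℕ) (hq : 2 ≤ q) (k : ℕ) : TreeVertex q :=
  ⟨k, List.replicate k (one q hq), by
    intro a t _ hw
    cases k with
    | zero => simp at hw
    | succ n =>
      rw [List.replicate_succ] at hw
      have : a = one q hq := (List.cons.injEq _ _ _ _).mp hw |>.1.symm
      simp [this, one]⟩

/-- the point `ζ^i_k ∈ DL_3(q)`: `m_i = l_i = k` (upward edges labeled `1`),
all other coordinates trivial -/
def zeta (q : ℕ) (hq : 2 ≤ q) (i : Fin 3) (k : ℕ) : DL 3 q :=
  ⟨fun j => if j = i then ray q hq k else TreeVertex.o q, by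
    have h0 : ∀ j : Fin 3, ((if j = i then ray q hq k else TreeVertex.o q) : TreeVertex q).h = 0 := by
      intro j
      split <;> simp [TreeVertex.h, TreeVertex.l, ray, TreeVertex.o]
    simp [h0]⟩

/-- the sequence `β_n`: `m_3(β_n) = l_3(β_n) = n` along edges labeled `1`,
trivial in the first two trees -/
def beta (q : ℕ) (hq : 2 ≤ q) (n : ℕ) : DL 3 q := zeta q hq 2 n

/-- the sequence `α_n`: `l_1(α_n) = n` (upward edges labeled `1`),
`m_2(α_n) = n`, all other coordinates trivial -/
def alpha (q : ℕ) (hq : 2 ≤ q) (n : ℕ) : DL 3 q :=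
  ⟨![⟨0, List.replicate n (one q hq), fun _ _ h _ => absurd rfl h⟩,
     ⟨n, [], by intro a t _ hw; simp at hw⟩,
     TreeVertex.o q], by
    simp [Fin.sum_univ_three, TreeVertex.h, TreeVertex.l, TreeVertex.o]⟩

/-- the point `ν^{j,ε}_k` (`j ∈ {1,2}`): ascend `k` edges labeled `ε` in tree `j`,
descend `k` edges in tree `3`; so `l_j = k`, `m_3 = k`, all else trivial. -/
def nu (q : ℕ) (j : Fin 2) (ε : Fin q) (k : ℕ) : DL 3 q :=
  ⟨fun i =>
      if i = Fin.castLE (by omega) j then ⟨0, List.replicate k ε, fun _ _ h _ => absurd rfl h⟩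
      else if i = 2 then ⟨k, [], by intro a t _ hw; simp at hw⟩
      else TreeVertex.o q, by
    rw [Fin.sum_univ_three]
    fin_cases j <;>
      simp [TreeVertex.h, TreeVertex.l, TreeVertex.o, Fin.ext_iff]⟩

/-- the horofunction `β` of `DL_3(q)`:
`β(z) = m_1 + m_2 + min_{j=1,2} {m_j + h_3, h_j + h_3, l_j}` -/
def betaFn {q : ℕ} (w : DL 3 q) : ℤ :=
  (DL.mc w 0 : ℤ) + DL.mc w 1 +
    min ((DL.mc w 0 : ℤ) + DL.hc w 2)
      (min (DL.hc w 0 + DL.hc w 2)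
        (min (DL.lc w 0 : ℤ)
          (min ((DL.mc w 1 : ℤ) + DL.hc w 2)
            (min (DL.hc w 1 + DL.hc w 2) (DL.lc w 1 : ℤ)))))

end DL3

open DL3

section AuxDL3

open TreeVertex

private lemma aux_sup23 (f : ℕ → ℕ) : (⨆ i ∈ Finset.Icc 2 3, f i) = max (f 2) (f 3) := by
  have hub : ∀ i : ℕ, (⨆ _ : i ∈ Finset.Icc 2 3, f i) ≤ max (f 2) (f 3) := by
    intro i
    by_cases h : i ∈ Finset.Icc 2 3
    · rw [ciSup_pos h]
      obtain ⟨h1, h2⟩ := Finset.mem_Icc.mp h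
      rcases (by omega : i = 2 ∨ i = 3) with rfl | rfl
      · exact le_max_left _ _
      · exact le_max_right _ _
    · simp [ciSup_of_empty, h]
  apply le_antisymm
  · exact ciSup_le hub
  · have hb : BddAbove (Set.range fun i => ⨆ _ : i ∈ Finset.Icc 2 3, f i) :=
      ⟨max (f 2) (f 3), by rintro _ ⟨i, rfl⟩; exact hub i⟩
    apply max_le
    · exact le_ciSup_of_le hb 2 (by rw [ciSup_pos (by decide)])
    · exact le_ciSup_of_le hb 3 (by rw [ciSup_pos (by decide)])

private lemma aux_fST2 (m l : Fin 3 → ℕ) (σ : Equiv.Perm (Fin 3)) :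
    DL.fST m l σ 2 = m (σ 0) + m (σ 1) + (l (σ 1) + l (σ 2)) := by
  simp [DL.fST, Finset.sum_filter, Fin.sum_univ_three]

private lemma aux_fST3 (m l : Fin 3 → ℕ) (σ : Equiv.Perm (Fin 3)) :
    DL.fST m l σ 3 = (m (σ 0) + m (σ 1) + m (σ 2)) + m (σ 0) + l (σ 2) := by
  simp [DL.fST, Finset.sum_filter, Fin.sum_univ_three]

private lemma aux_dist_eq {q : ℕ} (x y : DL 3 q) :
    DL.dist x y = ⨅ σ : Equiv.Perm (Fin 3),
      max (DL.fST (DL.mm x y) (DL.ll x y) σ 2) (DL.fST (DL.mm x y) (DL.ll x y) σ 3) := by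
  unfold DL.dist
  congr 1
  funext σ
  exact aux_sup23 _

private lemma aux_iInf_eq (g : Equiv.Perm (Fin 3) → ℕ) (c : ℕ) (σ₀ : Equiv.Perm (Fin 3))
    (h1 : g σ₀ = c) (h2 : ∀ σ, c ≤ g σ) : (⨅ σ, g σ) = c :=
  le_antisymm (h1 ▸ ciInf_le (OrderBot.bddBelow _) σ₀) (le_ciInf h2)

private lemma aux_perm_sum (m : Fin 3 → ℕ) (σ : Equiv.Perm (Fin 3)) :
    m (σ 0) + m (σ 1) + m (σ 2) = m 0 + m 1 + m 2 := by
  have := Equiv.sum_comp σ m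
  simpa [Fin.sum_univ_three, add_assoc] using this

private lemma aux_surj (σ : Equiv.Perm (Fin 3)) : σ 0 = 2 ∨ σ 1 = 2 ∨ σ 2 = 2 := by
  obtain ⟨a, ha⟩ := σ.surjective 2
  rcases (by decide : ∀ b : Fin 3, b = 0 ∨ b = 1 ∨ b = 2) a with rfl | rfl | rfl
  · exact Or.inl ha
  · exact Or.inr (Or.inl ha)
  · exact Or.inr (Or.inr ha)

end AuxDL3
/-- In `DL_3(q)`, with `α_n` the vertex having
`l_1(α_n) = m_2(α_n) = n` (all other coordinates `0`, upward edges in `T_1`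
labeled `1`) and `β_n` the vertex with `m_3(β_n) = l_3(β_n) = n` (all other
coordinates `0`, upward edges labeled `1`), one has
`d(β_n, α_n) = 2n = d(β_n, id)` for every `n`. -/
theorem dist_beta_alpha {q : ℕ} (hq : 2 ≤ q) (n : ℕ) :
    DL.dist (beta q hq n) (alpha q hq n) = 2 * n ∧
    DL.dist (beta q hq n) (DL.id0 3 q) = 2 * n := by
  open TreeVertex in
  have hba : DL.mm (beta q hq n) (alpha q hq n) 0 = 0 ∧
      DL.mm (beta q hq n) (alpha q hq n) 1 = n ∧
      DL.mm (beta q hq n) (alpha q hq n) 2 = n ∧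
      DL.ll (beta q hq n) (alpha q hq n) 0 = n ∧
      DL.ll (beta q hq n) (alpha q hq n) 1 = 0 ∧
      DL.ll (beta q hq n) (alpha q hq n) 2 = n := by
    rcases Nat.eq_zero_or_pos n with h | h
    · subst h
      refine ⟨?_, ?_, ?_, ?_, ?_, ?_⟩ <;>
        simp [DL.mm, DL.ll, beta, alpha, zeta, ray, mPair, TreeVertex.l, TreeVertex.o, cpl]
    · refine ⟨?_, ?_, ?_, ?_, ?_, ?_⟩ <;>
        simp [DL.mm, DL.ll, beta, alpha, zeta, ray, mPair, TreeVertex.l, TreeVertex.o, cpl, h,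
          Nat.not_lt.mpr h.le]
  open TreeVertex in
  have hbi : DL.mm (beta q hq n) (DL.id0 3 q) 0 = 0 ∧
      DL.mm (beta q hq n) (DL.id0 3 q) 1 = 0 ∧
      DL.mm (beta q hq n) (DL.id0 3 q) 2 = n ∧
      DL.ll (beta q hq n) (DL.id0 3 q) 0 = 0 ∧
      DL.ll (beta q hq n) (DL.id0 3 q) 1 = 0 ∧
      DL.ll (beta q hq n) (DL.id0 3 q) 2 = n := by
    rcases Nat.eq_zero_or_pos n with h | h
    · subst h
      refine ⟨?_, ?_, ?_, ?_, ?_, ?_⟩ <;>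
        simp [DL.mm, DL.ll, beta, DL.id0, zeta, ray, mPair, TreeVertex.l, TreeVertex.o, cpl]
    · refine ⟨?_, ?_, ?_, ?_, ?_, ?_⟩ <;>
        simp [DL.mm, DL.ll, beta, DL.id0, zeta, ray, mPair, TreeVertex.l, TreeVertex.o, cpl, h,
          Nat.not_lt.mpr h.le]
  constructor
  · -- d(β_n, α_n) = 2n
    obtain ⟨e0, e1, e2, f0, f1, f2⟩ := hba
    rw [aux_dist_eq]
    apply aux_iInf_eq _ _ (Equiv.swap 1 2)
    · have s0 : (Equiv.swap 1 2 : Equiv.Perm (Fin 3)) 0 = 0 := by decide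
      have s1 : (Equiv.swap 1 2 : Equiv.Perm (Fin 3)) 1 = 2 := by decide
      have s2 : (Equiv.swap 1 2 : Equiv.Perm (Fin 3)) 2 = 1 := by decide
      rw [aux_fST2, aux_fST3, s0, s1, s2]
      omega
    · intro σ
      have h3 := aux_fST3 (DL.mm (beta q hq n) (alpha q hq n)) (DL.ll (beta q hq n) (alpha q hq n)) σ
      have hs := aux_perm_sum (DL.mm (beta q hq n) (alpha q hq n)) σ
      have : 2 * n ≤ DL.fST (DL.mm (beta q hq n) (alpha q hq n)) (DL.ll (beta q hq n) (alpha q hq n)) σ 3 := by omega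
      exact le_trans this (le_max_right _ _)
  · -- d(β_n, id) = 2n
    obtain ⟨e0, e1, e2, f0, f1, f2⟩ := hbi
    rw [aux_dist_eq]
    apply aux_iInf_eq _ _ 1
    · have s0 : (1 : Equiv.Perm (Fin 3)) 0 = 0 := rfl
      have s1 : (1 : Equiv.Perm (Fin 3)) 1 = 1 := rfl
      have s2 : (1 : Equiv.Perm (Fin 3)) 2 = 2 := rfl
      rw [aux_fST2, aux_fST3, s0, s1, s2]
      omega
    · intro σ
      have h2 := aux_fST2 (DL.mm (beta q hq n) (DL.id0 3 q)) (DL.ll (beta q hq n) (DL.id0 3 q)) σ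
      have h3 := aux_fST3 (DL.mm (beta q hq n) (DL.id0 3 q)) (DL.ll (beta q hq n) (DL.id0 3 q)) σ
      have hs := aux_perm_sum (DL.mm (beta q hq n) (DL.id0 3 q)) σ
      rcases aux_surj σ with h | h | h
      · have hm : DL.mm (beta q hq n) (DL.id0 3 q) (σ 0) = n := by rw [h]; exact e2
        have : 2 * n ≤ DL.fST (DL.mm (beta q hq n) (DL.id0 3 q)) (DL.ll (beta q hq n) (DL.id0 3 q)) σ 3 := by omega
        exact le_trans this (le_max_right _ _)
      · have hm : DL.mm (beta q hq n) (DL.id0 3 q) (σ 1) = n := by rw [h]; exact e2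
        have hl : DL.ll (beta q hq n) (DL.id0 3 q) (σ 1) = n := by rw [h]; exact f2
        have : 2 * n ≤ DL.fST (DL.mm (beta q hq n) (DL.id0 3 q)) (DL.ll (beta q hq n) (DL.id0 3 q)) σ 2 := by omega
        exact le_trans this (le_max_left _ _)
      · have hl : DL.ll (beta q hq n) (DL.id0 3 q) (σ 2) = n := by rw [h]; exact f2
        have : 2 * n ≤ DL.fST (DL.mm (beta q hq n) (DL.id0 3 q)) (DL.ll (beta q hq n) (DL.id0 3 q)) σ 3 := by omega
        exact le_trans this (le_max_right _ _)
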